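/- Fix 0 ≤ h ≤ α, κ ∈ [0,α], and λ ∈ [0,1]. Define h_{κ,λ}(θ) = κ(1−θ) for θ ≥ λ and h_{κ,λ}(θ) = κ(1−λ) for θ ≤ λ. Then h_{κ,λ} ∈ 𝓖̄_0(α). Moreover, if ψ ∈ 𝓖̄_h(α) satisfies h_{κ,λ}(λ) ≤ ψ(λ), then h_{κ,λ}(θ) ≤ ψ(θ) for all θ ∈ [0,1]. -/
import Mathlib


open Set Filter

/-- The space `𝓑`: functions on `Δ = {(u,v) : 0 ≤ v ≤ u}` with `ψ(u,u)=0`, nonnegative,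
subadditive, increasing in the first variable and decreasing in the second. -/
def MemB (ψ : ℝ → ℝ → ℝ) : Prop :=
  (∀ u, 0 ≤ u → ψ u u = 0) ∧
  (∀ u v, 0 ≤ v → v ≤ u → 0 ≤ ψ u v) ∧
  (∀ u w v, 0 ≤ v → v ≤ w → w ≤ u → ψ u v ≤ ψ u w + ψ w v) ∧
  (∀ u w v, 0 ≤ v → v ≤ w → w ≤ u → ψ w v ≤ ψ u v) ∧
  (∀ u w v, 0 ≤ v → v ≤ w → w ≤ u → ψ u w ≤ ψ u v)

/-- The space `𝓑(α)`: members of `𝓑` which are `α`-Lipschitz for the `L¹` metric on `Δ`. -/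
def MemBLip (α : ℝ) (ψ : ℝ → ℝ → ℝ) : Prop :=
  MemB ψ ∧ ∀ u v u' v', 0 ≤ v → v ≤ u → 0 ≤ v' → v' ≤ u' →
    |ψ u v - ψ u' v'| ≤ α * (|u - u'| + |v - v'|)

/-- The space `𝓑̄_h(α)`: members of `𝓑(α)` which are increasing along diagonals and whose
restriction to the bottom edge grows at least at rate `h`. -/
def MemBbar (h α : ℝ) (ψ : ℝ → ℝ → ℝ) : Prop :=
  MemBLip α ψ ∧
  (∀ u v z, 0 ≤ v → v ≤ u → 0 ≤ z → ψ u v ≤ ψ (u + z) (v + z)) ∧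
  (∀ u v, 0 ≤ v → v ≤ u → h * (u - v) ≤ ψ u 0 - ψ v 0)

/-- The space `𝓖`: decreasing nonnegative functions on `[0,1]` vanishing at `1` with
`γ(λθ) ≤ γ(θ) + θγ(λ)`. -/
def MemG (γ : ℝ → ℝ) : Prop :=
  γ 1 = 0 ∧ (∀ θ, 0 ≤ θ → θ ≤ 1 → 0 ≤ γ θ) ∧
  (∀ a b, 0 ≤ a → a ≤ b → b ≤ 1 → γ b ≤ γ a) ∧
  (∀ l t, 0 ≤ l → l ≤ 1 → 0 ≤ t → t ≤ 1 → γ (l * t) ≤ γ t + t * γ l)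

/-- The space `𝓖(α)`: `α`-Lipschitz members of `𝓖`. -/
def MemGLip (α : ℝ) (γ : ℝ → ℝ) : Prop :=
  MemG γ ∧ ∀ a b, 0 ≤ a → a ≤ 1 → 0 ≤ b → b ≤ 1 → |γ a - γ b| ≤ α * |a - b|

/-- The space `𝓖̄_h(α)`: members of `𝓖(α)` with `γ(0) ≥ h` and `θ ↦ γ(θ)/(1-θ)` increasing. -/
def MemGbar (h α : ℝ) (γ : ℝ → ℝ) : Prop :=
  MemGLip α γ ∧ h ≤ γ 0 ∧
  ∀ a b, 0 ≤ a → a ≤ b → b < 1 → γ a / (1 - a) ≤ γ b / (1 - b)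

/-- The normalized limit `Γ(ψ)(θ) = limsup_{u→∞} ψ(u,θu)/u`. -/
noncomputable def Gam (ψ : ℝ → ℝ → ℝ) (θ : ℝ) : ℝ :=
  Filter.limsup (fun u => ψ u (θ * u) / u) Filter.atTop

/-- The projection `Φ_h(β)(u,v) = max_{0 ≤ z ≤ u}` of `β(u-z,v-z)` for `z ≤ v` and
`h(z-v) + β(u-z,0)` for `v ≤ z ≤ u`. -/
noncomputable def Phi (h : ℝ) (β : ℝ → ℝ → ℝ) (u v : ℝ) : ℝ :=
  sSup ((fun z => if z ≤ v then β (u - z) (v - z) else h * (z - v) + β (u - z) 0) ''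
    Set.Icc 0 u)

/-- The projection `Ω_h(γ)(θ) = (1-θ)·max{h, max_{0 ≤ λ ≤ θ} γ(λ)/(1-λ)}`. -/
noncomputable def Om (h : ℝ) (γ : ℝ → ℝ) (θ : ℝ) : ℝ :=
  (1 - θ) * max h (sSup ((fun l => γ l / (1 - l)) '' Set.Icc 0 θ))

/-- The space `𝓒(α)`: increasing `α`-Lipschitz functions `g : [0,∞) → [0,∞)` with `g(0)=0`. -/
def MemC (α : ℝ) (g : ℝ → ℝ) : Prop :=
  g 0 = 0 ∧ (∀ u, 0 ≤ u → 0 ≤ g u) ∧ (∀ a b, 0 ≤ a → a ≤ b → g a ≤ g b) ∧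
  (∀ a b, 0 ≤ a → 0 ≤ b → |g a - g b| ≤ α * |a - b|)

set_option maxHeartbeats 1600000 in
/-- The minimal functions `h_{κ,λ}` belong to `𝓖̄_0(α)`, and if `ψ ∈ 𝓖̄_h(α)` dominates
`h_{κ,λ}` at `λ`, then it dominates `h_{κ,λ}` everywhere on `[0,1]`. -/
theorem minimal_elements (h α κ lam : ℝ) (hh : 0 ≤ h) (hhα : h ≤ α)
    (hκ0 : 0 ≤ κ) (hκα : κ ≤ α) (hlam0 : 0 ≤ lam) (hlam1 : lam ≤ 1) :
    MemGbar 0 α (fun θ => if θ ≤ lam then κ * (1 - lam) else κ * (1 - θ)) ∧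
    ∀ ψ : ℝ → ℝ, MemGbar h α ψ →
      κ * (1 - lam) ≤ ψ lam →
      ∀ θ, 0 ≤ θ → θ ≤ 1 →
        (if θ ≤ lam then κ * (1 - lam) else κ * (1 - θ)) ≤ ψ θ := by
  have hα0 : 0 ≤ α := le_trans hh hhα
  constructor
  · refine ⟨⟨⟨?_, ?_, ?_, ?_⟩, ?_⟩, ?_, ?_⟩
    · simp only
      split_ifs with h1
      · have : lam = 1 := le_antisymm hlam1 h1
        rw [this]; ring
      · ring
    · intro θ h0 h1; simp only
      split_ifs <;> nlinarith
    · intro a b ha hab hb1; simp only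
      split_ifs <;> nlinarith
    · intro l t hl0 hl1 ht0 ht1; simp only
      split_ifs <;> nlinarith [mul_nonneg (mul_nonneg hκ0 ht0) (sub_nonneg.2 hl1),
        mul_nonneg (mul_nonneg hκ0 ht0) (sub_nonneg.2 hlam1),
        mul_nonneg (mul_nonneg hκ0 hlam0) (sub_nonneg.2 ht1),
        mul_nonneg (mul_nonneg hκ0 hl0) (sub_nonneg.2 ht1)]
    · intro a b ha0 ha1 hb0 hb1; simp only
      have h1 := le_abs_self (a - b)
      have h2 := neg_abs_le (a - b)
      split_ifs <;> rw [abs_sub_le_iff] <;> constructor <;>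
        nlinarith [mul_nonneg hκ0 (abs_nonneg (a-b)), mul_le_mul_of_nonneg_right hκα (abs_nonneg (a-b))]
    · simp only
      split_ifs <;> nlinarith
    · intro a b ha0 hab hb1; simp only
      have ha1 : a < 1 := lt_of_le_of_lt hab hb1
      have hpa : (0:ℝ) < 1 - a := by linarith
      have hpb : (0:ℝ) < 1 - b := by linarith
      rw [div_le_div_iff₀ hpa hpb]
      split_ifs <;>
        nlinarith [mul_nonneg hκ0 hpa.le, mul_nonneg hκ0 hpb.le,
          mul_nonneg (mul_nonneg hκ0 (sub_nonneg.2 hlam1)) (sub_nonneg.2 hab)]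
  · rintro ψ ⟨⟨⟨hψ1, hψnn, hψdec, _⟩, _⟩, _, hψratio⟩ hdom θ hθ0 hθ1
    split_ifs with hθlam
    · -- θ ≤ lam : use ψ decreasing
      calc κ * (1 - lam) ≤ ψ lam := hdom
        _ ≤ ψ θ := hψdec θ lam hθ0 hθlam hlam1
    · -- lam < θ
      push_neg at hθlam
      rcases eq_or_lt_of_le hθ1 with h1 | h1
      · rw [h1, hψ1]; nlinarith
      · have hlam1' : lam < 1 := lt_trans hθlam h1
        have hpl : (0:ℝ) < 1 - lam := by linarith
        have hpθ : (0:ℝ) < 1 - θ := by linarith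
        have hr := hψratio lam θ hlam0 (le_of_lt hθlam) h1
        rw [div_le_div_iff₀ hpl hpθ] at hr
        have hκψ : κ * (1 - lam) * (1 - θ) ≤ ψ lam * (1 - θ) :=
          mul_le_mul_of_nonneg_right hdom (le_of_lt hpθ)
        have : κ * (1 - lam) * (1 - θ) ≤ ψ θ * (1 - lam) := le_trans hκψ hr
        nlinarith
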